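/- The operator C̃ defined on the cosine basis by C̃[e₀] = 0 and C̃[e_n](θ) = sin(nθ)/(n sin θ) for n ≥ 1 admits the integral representation C̃[φ](θ) = (θ(π-θ)/(π sin θ)) [ (1/θ) ∫₀^θ φ(u) du - (1/(π-θ)) ∫_θ^π φ(u) du ] for each finite linear combination φ of the cosine basis functions e_n(θ) = cos(nθ) and each θ ∈ (0, π). -/

import Mathlib

open Real Finset intervalIntegral

lemma integral_cos_nmul (n : ℕ) (A B : ℝ) :
    ∫ u in A..B, Real.cos (n * u)
      = if n = 0 then B - A else (Real.sin (n * B) - Real.sin (n * A)) / n := by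
  rcases eq_or_ne n 0 with h | h
  · simp [h]
  · have hn : (n : ℝ) ≠ 0 := Nat.cast_ne_zero.mpr h
    simp only [h, if_false]
    have := integral_comp_mul_left (fun x => Real.cos x) (a := A) (b := B) hn
    simp only [integral_cos, smul_eq_mul] at this
    rw [this]
    field_simp

/-- Integral representation of the operator `C̃` (defined on the cosine basis by
`C̃[e₀] = 0`, `C̃[e_n](θ) = sin(nθ)/(n sin θ)`) on finite linear combinations of cosines. -/
theorem C_integral_representation (N : ℕ) (a : ℕ → ℝ) (θ : ℝ)
    (hθ : θ ∈ Set.Ioo 0 Real.pi) :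
    ∑ n ∈ Finset.range (N + 1),
        a n * (if n = 0 then (0:ℝ) else Real.sin (n * θ) / (n * Real.sin θ))
      = (θ * (Real.pi - θ) / (Real.pi * Real.sin θ)) *
          ((1 / θ) *
              (∫ u in (0:ℝ)..θ, ∑ n ∈ Finset.range (N + 1), a n * Real.cos (n * u))
            - (1 / (Real.pi - θ)) *
              (∫ u in θ..Real.pi, ∑ n ∈ Finset.range (N + 1), a n * Real.cos (n * u))) := by
  obtain ⟨hθ0, hθπ⟩ := hθ
  have hθne : θ ≠ 0 := ne_of_gt hθ0
  have hπθ : Real.pi - θ ≠ 0 := sub_ne_zero.mpr (ne_of_gt hθπ)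
  have hπ : Real.pi ≠ 0 := ne_of_gt Real.pi_pos
  have hsin : Real.sin θ ≠ 0 := ne_of_gt (Real.sin_pos_of_pos_of_lt_pi hθ0 hθπ)
  have hI : ∀ A B : ℝ,
      (∫ u in A..B, ∑ n ∈ Finset.range (N + 1), a n * Real.cos (n * u))
        = ∑ n ∈ Finset.range (N + 1),
            a n * (if n = 0 then B - A else (Real.sin (n * B) - Real.sin (n * A)) / n) := by
    intro A B
    rw [integral_finset_sum]
    · refine Finset.sum_congr rfl fun n _ => ?_
      rw [integral_const_mul, integral_cos_nmul]
    · intro n _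
      exact (Continuous.intervalIntegrable (by continuity) _ _)
  rw [hI, hI, Finset.mul_sum, Finset.mul_sum, ← Finset.sum_sub_distrib, Finset.mul_sum]
  refine Finset.sum_congr rfl fun n _ => ?_
  rcases eq_or_ne n 0 with h | h
  · simp only [h, if_true, if_pos]
    field_simp
    ring
  · have hn : (n : ℝ) ≠ 0 := Nat.cast_ne_zero.mpr h
    have hsinπ : Real.sin (n * Real.pi) = 0 := Real.sin_nat_mul_pi n
    simp only [h, if_false, Real.sin_zero, mul_zero, hsinπ]
    field_simp
    ring
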